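/- Assuming the Continuum Hypothesis, in every uncountable Polish space X there exists a non-Borel subset S ⊆ X such that both S and X \ S are (Borel, countable)-saturated: every Borel set meeting S (respectively X \ S) in an uncountable set contains an uncountable Borel subset of S (respectively of X \ S). -/

import Mathlib

open Cardinal Set Classical

namespace SatCH

universe u v

lemma not_countable_cantor : ¬ Countable (ℕ → Bool) := by
  intro h3
  have h4 : #(ℕ → Bool) ≤ ℵ₀ := Cardinal.mk_le_aleph0_iff.mpr h3
  have h5 : #(ℕ → Bool) = 𝔠 := by
    rw [← Cardinal.two_power_aleph0, ← Cardinal.mk_bool, ← Cardinal.mk_nat, Cardinal.power_def]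
  rw [h5] at h4
  exact absurd h4 (not_le.mpr Cardinal.aleph0_lt_continuum)

lemma exists_closed_unc_aux {X : Type*} {t₁ t₂ : TopologicalSpace X} (hle : t₁ ≤ t₂)
    (hpol : @PolishSpace X t₁) (ht2 : @T2Space X t₂) {B : Set X}
    (hcl : @IsClosed X t₁ B) (hunc : ¬B.Countable) :
    ∃ K : Set X, K ⊆ B ∧ @IsClosed X t₂ K ∧ ¬K.Countable := by
  obtain ⟨f, hrange, hcont, hinj⟩ :=
    @IsClosed.exists_nat_bool_injection_of_not_countable X t₁ hpol B hcl hunc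
  have hcont' : @Continuous _ _ _ t₂ f := by
    rw [@continuous_def _ _ _ t₂]
    intro s hs
    exact @Continuous.isOpen_preimage _ _ _ t₁ f hcont s (hs.mono hle)
  have hcomp : @IsCompact X t₂ (Set.range f) := @isCompact_range _ _ _ t₂ _ f hcont'
  refine ⟨Set.range f, hrange, @IsCompact.isClosed X t₂ ht2 _ hcomp, fun hc => ?_⟩
  have h2 : (Set.univ : Set (ℕ → Bool)).Countable := by
    have := hc.preimage hinj
    simpa using this
  exact not_countable_cantor (Set.countable_univ_iff.mp h2)

lemma CH_transfer (h : Cardinal.continuum.{v} = Cardinal.aleph.{v} 1) :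
    Cardinal.continuum.{u} = Cardinal.aleph.{u} 1 := by
  have h1 := congrArg (Cardinal.lift.{u}) h
  rw [Cardinal.lift_continuum, Cardinal.lift_aleph, Ordinal.lift_one] at h1
  have h2 : Cardinal.lift.{v} (Cardinal.continuum.{u}) = Cardinal.lift.{v} (Cardinal.aleph.{u} 1) := by
    rw [Cardinal.lift_continuum, Cardinal.lift_aleph, Ordinal.lift_one]
    exact h1
  exact Cardinal.lift_injective h2

/-- index type of order type `ω₁` -/
abbrev Idx : Type u := (Cardinal.aleph.{u} 1).ord.ToType

lemma seg_countable (i : Idx.{u}) : Countable {j : Idx // j < i} := by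
  have h3 : #(Set.Iio i) < Cardinal.aleph 1 := Cardinal.mk_Iio_ord_toType i
  have h4 : (Set.Iio i).Countable := (Cardinal.countable_iff_lt_aleph_one _).mpr h3
  exact h4.to_subtype

variable {X : Type u} [TopologicalSpace X] [PolishSpace X] [MeasurableSpace X] [BorelSpace X]

/-- An uncountable Borel set contains an uncountable closed subset. -/
lemma exists_closed_unc {B : Set X} (hB : MeasurableSet B) (hunc : ¬B.Countable) :
    ∃ K : Set X, K ⊆ B ∧ IsClosed K ∧ ¬K.Countable := by
  obtain ⟨t', ht'le, ht'pol, hcl, -⟩ := hB.isClopenable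
  exact exists_closed_unc_aux ht'le ht'pol inferInstance hcl hunc

/-- An uncountable Borel set contains an uncountable closed subset avoiding a countable set. -/
lemma exists_closed_unc_avoid {B D : Set X} (hB : MeasurableSet B) (hD : D.Countable)
    (hunc : ¬B.Countable) :
    ∃ K : Set X, K ⊆ B ∧ K ∩ D = ∅ ∧ IsClosed K ∧ ¬K.Countable := by
  have hBD : MeasurableSet (B \ D) := hB.diff hD.measurableSet
  have huncBD : ¬(B \ D).Countable := fun h =>
    hunc (((h.union hD)).mono (fun x hx => by
      by_cases hxD : x ∈ D
      · exact Or.inr hxD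
      · exact Or.inl ⟨hx, hxD⟩))
  obtain ⟨K, hKB, hKcl, hKunc⟩ := exists_closed_unc hBD huncBD
  exact ⟨K, fun x hx => (hKB hx).1, by
    ext x; simp only [Set.mem_inter_iff, Set.mem_empty_iff_false, iff_false, not_and]
    exact fun hx hD' => (hKB hx).2 hD', hKcl, hKunc⟩

lemma exists_enum (CH : Cardinal.continuum.{u} = Cardinal.aleph.{u} 1) :
    ∃ e : Idx.{u} → Set X,
      (∀ i, MeasurableSet (e i)) ∧ ∀ B : Set X, MeasurableSet B → ∃ i, e i = B := by
  classical
  have hcount : #{ s : Set X | MeasurableSet s } ≤ continuum := by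
    obtain ⟨b, hbc, hgen⟩ := MeasurableSpace.CountablyGenerated.isCountablyGenerated (α := X)
    have hble : #b ≤ continuum := hbc.le_aleph0.trans Cardinal.aleph0_le_continuum
    have h := MeasurableSpace.cardinal_measurableSet_le_continuum hble
    rw [← hgen] at h
    exact h
  rw [CH, ← Cardinal.mk_ord_toType (Cardinal.aleph.{u} 1)] at hcount
  obtain ⟨f⟩ := Cardinal.le_def _ _ |>.mp hcount
  refine ⟨fun i => if h : ∃ s : { s : Set X | MeasurableSet s }, f s = i then h.choose.1 else ∅,
    fun i => ?_, fun B hB => ?_⟩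
  · dsimp only
    split
    · next h => exact h.choose.2
    · exact MeasurableSet.empty
  · refine ⟨f ⟨B, hB⟩, ?_⟩
    have h : ∃ s : { s : Set X | MeasurableSet s }, f s = f ⟨B, hB⟩ := ⟨⟨B, hB⟩, rfl⟩
    beta_reduce
    rw [dif_pos h]
    have h2 := f.injective h.choose_spec
    rw [h2]

omit [MeasurableSpace X] [BorelSpace X] in
lemma baire_contra {P₀ : Set X} (hP : Perfect P₀) (hne : P₀.Nonempty)
    {D' : Set ↥P₀} (hD'd : Dense D')
    {ι : Type*} [Countable ι] (K : ι → Set X)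
    (hKc : ∀ n, IsClosed (K n)) (hKD : ∀ n, K n ∩ (Subtype.val '' D') = ∅)
    {W : Set X} (hW : W.Countable)
    (hcover : (Set.univ : Set X) ⊆ (⋃ n, K n) ∪ W) : False := by
  haveI : PolishSpace ↥P₀ := hP.closed.polishSpace
  letI := TopologicalSpace.upgradeIsCompletelyMetrizable ↥P₀
  set K' : ι → Set ↥P₀ := fun n => Subtype.val ⁻¹' K n with hK'def
  have hK'nwd : ∀ n, IsNowhereDense (K' n) := by
    intro n
    rw [IsClosed.isNowhereDense_iff ((hKc n).preimage continuous_subtype_val)]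
    by_contra hint
    obtain ⟨z, hz1, hz2⟩ := hD'd.inter_open_nonempty _ isOpen_interior
      (nonempty_iff_ne_empty.mpr hint)
    have hzK' : z ∈ K' n := interior_subset hz1
    have hzK : (z : X) ∈ K n := hzK'
    have hmem : (z : X) ∈ K n ∩ (Subtype.val '' D') := ⟨hzK, ⟨z, hz2, rfl⟩⟩
    rw [hKD n] at hmem
    exact hmem
  have hsing : ∀ y : ↥P₀, IsNowhereDense ({y} : Set ↥P₀) := by
    intro y
    rw [IsClosed.isNowhereDense_iff isClosed_singleton]
    by_contra hint
    have hne' : (interior ({y} : Set ↥P₀)).Nonempty := nonempty_iff_ne_empty.mpr hint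
    have heq : interior ({y} : Set ↥P₀) = {y} := by
      apply Subset.antisymm interior_subset
      obtain ⟨z, hz⟩ := hne'
      have hzy' : z ∈ ({y} : Set ↥P₀) := interior_subset hz
      have hzy : z = y := hzy'
      rw [singleton_subset_iff]
      exact hzy ▸ hz
    have hopen : IsOpen ({y} : Set ↥P₀) := heq ▸ isOpen_interior
    obtain ⟨U, hU, hUeq⟩ := isOpen_induced_iff.mp hopen
    have hyU : (y : X) ∈ U := by
      have : y ∈ (Subtype.val ⁻¹' U : Set ↥P₀) := by rw [hUeq]; exact rfl
      exact this
    have hacc := hP.acc y.1 y.2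
    rw [accPt_iff_nhds] at hacc
    obtain ⟨z, ⟨hzU, hzP⟩, hzne⟩ := hacc U (hU.mem_nhds hyU)
    have hzmem : (⟨z, hzP⟩ : ↥P₀) ∈ (Subtype.val ⁻¹' U : Set ↥P₀) := hzU
    rw [hUeq] at hzmem
    exact hzne (congrArg Subtype.val hzmem)
  have hWc : (Subtype.val ⁻¹' W : Set ↥P₀).Countable := hW.preimage Subtype.val_injective
  have hmeagre : IsMeagre (Set.univ : Set ↥P₀) := by
    rw [isMeagre_iff_countable_union_isNowhereDense]
    refine ⟨(Set.range K') ∪ ((fun y => ({y} : Set ↥P₀)) '' (Subtype.val ⁻¹' W)), ?_, ?_, ?_⟩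
    · rintro t (⟨n, rfl⟩ | ⟨y, hy, rfl⟩)
      exacts [hK'nwd n, hsing y]
    · exact (countable_range K').union (hWc.image _)
    · intro y _
      rcases hcover (mem_univ (y : X)) with h | h
      · obtain ⟨n, hn⟩ := mem_iUnion.mp h
        exact ⟨K' n, Or.inl ⟨n, rfl⟩, hn⟩
      · exact ⟨{y}, Or.inr ⟨y, h, rfl⟩, rfl⟩
  have hres : (Set.univ : Set ↥P₀)ᶜ ∈ residual ↥P₀ := hmeagre
  rw [compl_univ] at hres
  have hdense : Dense (∅ : Set ↥P₀) := dense_of_mem_residual hres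
  obtain ⟨x, hx⟩ := hne
  obtain ⟨z, hz, hz2⟩ := hdense.inter_open_nonempty Set.univ isOpen_univ ⟨⟨x, hx⟩, mem_univ _⟩
  exact hz2

/-- record of choices at one stage: (P, A, Q, B) -/
abbrev Rec (X : Type u) : Type u := Set X × Set X × Set X × Set X

variable (e : Idx.{u} → Set X) (D : Set X)

def SigU (i : Idx) (prev : ∀ j : Idx, j < i → Rec X) : Set X :=
  ⋃ j : {j : Idx // j < i}, ((prev j j.2).1 ∪ (prev j j.2).2.1)

def TauU (i : Idx) (prev : ∀ j : Idx, j < i → Rec X) : Set X :=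
  ⋃ j : {j : Idx // j < i}, ((prev j j.2).2.2.1 ∪ (prev j j.2).2.2.2)

def Good (i : Idx) (prev : ∀ j : Idx, j < i → Rec X) : Prop :=
  ∀ (j : Idx) (h : j < i), IsClosed (prev j h).1 ∧ (prev j h).2.1.Countable ∧
    IsClosed (prev j h).2.2.1 ∧ (prev j h).2.2.2.Countable

def Spec (i : Idx) (prev : ∀ j : Idx, j < i → Rec X) (c : Rec X) : Prop :=
  (IsClosed c.1 ∧ c.2.1.Countable ∧ IsClosed c.2.2.1 ∧ c.2.2.2.Countable) ∧
  (Good i prev →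
    (c.1 ⊆ e i \ (TauU i prev ∪ D) ∧
      (¬(e i \ TauU i prev).Countable → ¬c.1.Countable)) ∧
    (c.2.2.1 ⊆ e i \ (SigU i prev ∪ c.1 ∪ D) ∧
      (¬(e i \ (SigU i prev ∪ c.1)).Countable → ¬c.2.2.1.Countable)) ∧
    (c.2.2.2 ⊆ e i \ (SigU i prev ∪ c.1) ∧
      ((e i \ (SigU i prev ∪ c.1)).Nonempty → c.2.2.2.Nonempty)) ∧
    (c.2.1 ⊆ (e i)ᶜ \ (SigU i prev ∪ c.1 ∪ TauU i prev ∪ c.2.2.1 ∪ c.2.2.2) ∧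
      (((e i)ᶜ \ (SigU i prev ∪ c.1 ∪ TauU i prev ∪ c.2.2.1 ∪ c.2.2.2)).Nonempty →
        c.2.1.Nonempty)))

lemma spec_exists (he : ∀ i, MeasurableSet (e i)) (hD : D.Countable) (i : Idx)
    (prev : ∀ j : Idx, j < i → Rec X) : ∃ c : Rec X, Spec e D i prev c := by
  classical
  by_cases hg : Good i prev
  · haveI hseg : Countable {j : Idx // j < i} := seg_countable i
    have hTmeas : MeasurableSet (TauU i prev) := by
      refine MeasurableSet.iUnion fun j => ?_
      exact ((hg j j.2).2.2.1.measurableSet).union ((hg j j.2).2.2.2.measurableSet)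
    have hSmeas : MeasurableSet (SigU i prev) := by
      refine MeasurableSet.iUnion fun j => ?_
      exact ((hg j j.2).1.measurableSet).union ((hg j j.2).2.1.measurableSet)
    obtain ⟨P, hPcl, hPsub, hPunc⟩ :
        ∃ P : Set X, IsClosed P ∧ P ⊆ e i \ (TauU i prev ∪ D) ∧
          (¬(e i \ TauU i prev).Countable → ¬P.Countable) := by
      by_cases h : (e i \ TauU i prev).Countable
      · exact ⟨∅, isClosed_empty, empty_subset _, fun hc => absurd h hc⟩
      · obtain ⟨K, hK1, hK2, hK3, hK4⟩ :=
          exists_closed_unc_avoid ((he i).diff hTmeas) hD h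
        refine ⟨K, hK3, fun x hx => ?_, fun _ => hK4⟩
        have hx1 := hK1 hx
        have hx2 : x ∉ D := fun hxD => by
          have : x ∈ K ∩ D := ⟨hx, hxD⟩
          rw [hK2] at this; exact this
        exact ⟨hx1.1, fun hmem => hmem.elim hx1.2 hx2⟩
    obtain ⟨Q, hQcl, hQsub, hQunc⟩ :
        ∃ Q : Set X, IsClosed Q ∧ Q ⊆ e i \ (SigU i prev ∪ P ∪ D) ∧
          (¬(e i \ (SigU i prev ∪ P)).Countable → ¬Q.Countable) := by
      by_cases h : (e i \ (SigU i prev ∪ P)).Countable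
      · exact ⟨∅, isClosed_empty, empty_subset _, fun hc => absurd h hc⟩
      · obtain ⟨K, hK1, hK2, hK3, hK4⟩ :=
          exists_closed_unc_avoid ((he i).diff (hSmeas.union hPcl.measurableSet)) hD h
        refine ⟨K, hK3, fun x hx => ?_, fun _ => hK4⟩
        have hx1 := hK1 hx
        have hx2 : x ∉ D := fun hxD => by
          have : x ∈ K ∩ D := ⟨hx, hxD⟩
          rw [hK2] at this; exact this
        refine ⟨hx1.1, fun hmem => ?_⟩
        rcases hmem with hmem | hmem
        · exact hx1.2 hmem
        · exact hx2 hmem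
    obtain ⟨Bp, hBcnt, hBsub, hBne⟩ :
        ∃ Bp : Set X, Bp.Countable ∧ Bp ⊆ e i \ (SigU i prev ∪ P) ∧
          ((e i \ (SigU i prev ∪ P)).Nonempty → Bp.Nonempty) := by
      by_cases h : (e i \ (SigU i prev ∪ P)).Nonempty
      · exact ⟨{h.choose}, countable_singleton _, singleton_subset_iff.mpr h.choose_spec,
          fun _ => singleton_nonempty _⟩
      · exact ⟨∅, countable_empty, empty_subset _, fun hne => absurd hne h⟩
    obtain ⟨A, hAcnt, hAsub, hAne⟩ :
        ∃ A : Set X, A.Countable ∧ A ⊆ (e i)ᶜ \ (SigU i prev ∪ P ∪ TauU i prev ∪ Q ∪ Bp) ∧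
          (((e i)ᶜ \ (SigU i prev ∪ P ∪ TauU i prev ∪ Q ∪ Bp)).Nonempty → A.Nonempty) := by
      by_cases h : ((e i)ᶜ \ (SigU i prev ∪ P ∪ TauU i prev ∪ Q ∪ Bp)).Nonempty
      · exact ⟨{h.choose}, countable_singleton _, singleton_subset_iff.mpr h.choose_spec,
          fun _ => singleton_nonempty _⟩
      · exact ⟨∅, countable_empty, empty_subset _, fun hne => absurd hne h⟩
    exact ⟨(P, A, Q, Bp), ⟨hPcl, hAcnt, hQcl, hBcnt⟩,
      fun _ => ⟨⟨hPsub, hPunc⟩, ⟨hQsub, hQunc⟩, ⟨hBsub, hBne⟩, ⟨hAsub, hAne⟩⟩⟩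
  · exact ⟨(∅, ∅, ∅, ∅), ⟨isClosed_empty, countable_empty, isClosed_empty, countable_empty⟩,
      fun h => absurd h hg⟩

noncomputable def FF (he : ∀ i, MeasurableSet (e i)) (hD : D.Countable) : Idx.{u} → Rec X :=
  (IsWellFounded.wf (α := Idx) (r := (· < ·))).fix
    (fun i ih => (spec_exists e D he hD i ih).choose)

lemma FF_spec (he : ∀ i, MeasurableSet (e i)) (hD : D.Countable) (i : Idx) :
    Spec e D i (fun j _ => FF e D he hD j) (FF e D he hD i) := by
  have h := WellFounded.fix_eq (IsWellFounded.wf (α := Idx) (r := (· < ·)))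
    (fun i ih => (spec_exists e D he hD i ih).choose) i
  have h2 := (spec_exists e D he hD i (fun j _ => FF e D he hD j)).choose_spec
  show Spec e D i (fun j _ => FF e D he hD j) ((IsWellFounded.wf (α := Idx) (r := (· < ·))).fix
    (fun i ih => (spec_exists e D he hD i ih).choose) i)
  rw [h]
  exact h2

lemma construct (he : ∀ i, MeasurableSet (e i)) (hD : D.Countable) :
    ∃ Pt At Qt Bt : Idx.{u} → Set X,
      (∀ i, IsClosed (Pt i)) ∧ (∀ i, IsClosed (Qt i)) ∧
      (∀ i, (At i).Countable) ∧ (∀ i, (Bt i).Countable) ∧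
      (∀ i, Pt i ⊆ e i \ ((⋃ j : {j : Idx // j < i}, (Qt j.1 ∪ Bt j.1)) ∪ D)) ∧
      (∀ i, ¬(e i \ (⋃ j : {j : Idx // j < i}, (Qt j.1 ∪ Bt j.1))).Countable →
        ¬(Pt i).Countable) ∧
      (∀ i, Qt i ⊆ e i \ ((⋃ j : {j : Idx // j < i}, (Pt j.1 ∪ At j.1)) ∪ Pt i ∪ D)) ∧
      (∀ i, ¬(e i \ ((⋃ j : {j : Idx // j < i}, (Pt j.1 ∪ At j.1)) ∪ Pt i)).Countable →
        ¬(Qt i).Countable) ∧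
      (∀ i, Bt i ⊆ e i \ ((⋃ j : {j : Idx // j < i}, (Pt j.1 ∪ At j.1)) ∪ Pt i)) ∧
      (∀ i, (e i \ ((⋃ j : {j : Idx // j < i}, (Pt j.1 ∪ At j.1)) ∪ Pt i)).Nonempty →
        (Bt i).Nonempty) ∧
      (∀ i, At i ⊆ (e i)ᶜ \ ((⋃ j : {j : Idx // j < i}, (Pt j.1 ∪ At j.1)) ∪ Pt i ∪
        (⋃ j : {j : Idx // j < i}, (Qt j.1 ∪ Bt j.1)) ∪ Qt i ∪ Bt i)) ∧
      (∀ i, ((e i)ᶜ \ ((⋃ j : {j : Idx // j < i}, (Pt j.1 ∪ At j.1)) ∪ Pt i ∪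
        (⋃ j : {j : Idx // j < i}, (Qt j.1 ∪ Bt j.1)) ∪ Qt i ∪ Bt i)).Nonempty →
        (At i).Nonempty) := by
  have hspec : ∀ i, Spec e D i (fun j _ => FF e D he hD j) (FF e D he hD i) :=
    fun i => FF_spec e D he hD i
  have hgood : ∀ i : Idx, Good (X := X) i (fun j (_ : j < i) => FF e D he hD j) :=
    fun i j h => (hspec j).1
  have hmain := fun i => (hspec i).2 (hgood i)
  refine ⟨fun i => (FF e D he hD i).1, fun i => (FF e D he hD i).2.1,
    fun i => (FF e D he hD i).2.2.1, fun i => (FF e D he hD i).2.2.2,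
    fun i => (hspec i).1.1, fun i => (hspec i).1.2.2.1,
    fun i => (hspec i).1.2.1, fun i => (hspec i).1.2.2.2,
    fun i => ((hmain i).1).1, fun i => ((hmain i).1).2,
    fun i => ((hmain i).2.1).1, fun i => ((hmain i).2.1).2,
    fun i => (hmain i).2.2.1.1, fun i => (hmain i).2.2.1.2,
    fun i => (hmain i).2.2.2.1, fun i => (hmain i).2.2.2.2⟩

set_option maxHeartbeats 1000000 in
lemma main [Uncountable X] (CH : Cardinal.continuum.{u} = Cardinal.aleph.{u} 1) :
    ∃ S : Set X, ¬MeasurableSet S ∧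
      (∀ B : Set X, MeasurableSet B → ¬(B ∩ S).Countable →
        ∃ C : Set X, MeasurableSet C ∧ C ⊆ B ∩ S ∧ ¬C.Countable) ∧
      (∀ B : Set X, MeasurableSet B → ¬(B ∩ Sᶜ).Countable →
        ∃ C : Set X, MeasurableSet C ∧ C ⊆ B ∩ Sᶜ ∧ ¬C.Countable) := by
  classical
  obtain ⟨e, he, hsurj⟩ := exists_enum (X := X) CH
  have huncX : ¬(Set.univ : Set X).Countable := by
    rw [Set.countable_univ_iff]
    exact not_countable
  obtain ⟨P₀, hP₀perf, hP₀ne, -⟩ :=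
    exists_perfect_nonempty_of_isClosed_of_not_countable isClosed_univ huncX
  obtain ⟨D', hD'c, hD'd⟩ := TopologicalSpace.exists_countable_dense ↥P₀
  have hD : (Subtype.val '' D' : Set X).Countable := hD'c.image _
  obtain ⟨Pt, At, Qt, Bt, hPcl, hQcl, hAcnt, hBcnt, hPsub, hPunc, hQsub, hQunc,
    hBsub, hBne, hAsub, hAne⟩ := construct e (Subtype.val '' D') he hD
  set D : Set X := Subtype.val '' D' with hDdef
  set Sig : Idx → Set X := fun i => ⋃ j : {j : Idx // j < i}, (Pt j.1 ∪ At j.1) with hSigdef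
  set Tau : Idx → Set X := fun i => ⋃ j : {j : Idx // j < i}, (Qt j.1 ∪ Bt j.1) with hTaudef
  have hPsub : ∀ i, Pt i ⊆ e i \ (Tau i ∪ D) := hPsub
  have hPunc : ∀ i, ¬(e i \ Tau i).Countable → ¬(Pt i).Countable := hPunc
  have hQsub : ∀ i, Qt i ⊆ e i \ (Sig i ∪ Pt i ∪ D) := hQsub
  have hQunc : ∀ i, ¬(e i \ (Sig i ∪ Pt i)).Countable → ¬(Qt i).Countable := hQunc
  have hBsub : ∀ i, Bt i ⊆ e i \ (Sig i ∪ Pt i) := hBsub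
  have hBne : ∀ i, (e i \ (Sig i ∪ Pt i)).Nonempty → (Bt i).Nonempty := hBne
  have hAsub : ∀ i, At i ⊆ (e i)ᶜ \ (Sig i ∪ Pt i ∪ Tau i ∪ Qt i ∪ Bt i) := hAsub
  have hAne : ∀ i, ((e i)ᶜ \ (Sig i ∪ Pt i ∪ Tau i ∪ Qt i ∪ Bt i)).Nonempty →
    (At i).Nonempty := hAne
  set S : Set X := ⋃ i, (Pt i ∪ At i) with hSdef
  set T : Set X := ⋃ i, (Qt i ∪ Bt i) with hTdef
  have hPS : ∀ i, Pt i ⊆ S := fun i x hx => mem_iUnion.mpr ⟨i, Or.inl hx⟩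
  have hAS : ∀ i, At i ⊆ S := fun i x hx => mem_iUnion.mpr ⟨i, Or.inr hx⟩
  have hQT : ∀ i, Qt i ⊆ T := fun i x hx => mem_iUnion.mpr ⟨i, Or.inl hx⟩
  have hBT : ∀ i, Bt i ⊆ T := fun i x hx => mem_iUnion.mpr ⟨i, Or.inr hx⟩
  have hSigS : ∀ i, Sig i ⊆ S := fun i x hx => by
    obtain ⟨j, hj⟩ := mem_iUnion.mp hx
    exact mem_iUnion.mpr ⟨j.1, hj⟩
  have hTauT : ∀ i, Tau i ⊆ T := fun i x hx => by
    obtain ⟨j, hj⟩ := mem_iUnion.mp hx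
    exact mem_iUnion.mpr ⟨j.1, hj⟩
  have hST : ∀ x, x ∈ S → x ∈ T → False := by
    intro x hxS hxT
    obtain ⟨i, hi⟩ := mem_iUnion.mp hxS
    obtain ⟨j, hj⟩ := mem_iUnion.mp hxT
    rcases lt_trichotomy i j with hij | heq | hij
    · have hxSig : x ∈ Sig j := mem_iUnion.mpr ⟨⟨i, hij⟩, hi⟩
      rcases hj with hj | hj
      · exact (hQsub j hj).2 (Or.inl (Or.inl hxSig))
      · exact (hBsub j hj).2 (Or.inl hxSig)
    · subst heq
      rcases hi with hi | hi <;> rcases hj with hj | hj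
      · exact (hQsub i hj).2 (Or.inl (Or.inr hi))
      · exact (hBsub i hj).2 (Or.inr hi)
      · exact (hAsub i hi).2 (Or.inl (Or.inr hj))
      · exact (hAsub i hi).2 (Or.inr hj)
    · have hxTau : x ∈ Tau i := mem_iUnion.mpr ⟨⟨j, hij⟩, hj⟩
      rcases hi with hi | hi
      · exact (hPsub i hi).2 (Or.inl hxTau)
      · exact (hAsub i hi).2 (Or.inl (Or.inl (Or.inr hxTau)))
  refine ⟨S, ?_, ?_, ?_⟩
  · -- S is not Borel
    intro hS
    obtain ⟨i, hei⟩ := hsurj S hS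
    by_cases h1 : (e i \ (Sig i ∪ Pt i)).Nonempty
    · obtain ⟨b, hb⟩ := hBne i h1
      have hbS : b ∈ S := hei ▸ (hBsub i hb).1
      exact hST b hbS (hBT i hb)
    · by_cases h2 : ((e i)ᶜ \ (Sig i ∪ Pt i ∪ Tau i ∪ Qt i ∪ Bt i)).Nonempty
      · obtain ⟨a, ha⟩ := hAne i h2
        have h3 := (hAsub i ha).1
        rw [hei] at h3
        exact h3 (hAS i ha)
      · have hcov : ∀ x : X, x ∈ Sig i ∪ Pt i ∪ Tau i ∪ Qt i ∪ Bt i := by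
          intro x
          by_cases hx : x ∈ e i
          · have hx2 : x ∈ Sig i ∪ Pt i := by
              by_contra hx2
              exact h1 ⟨x, hx, hx2⟩
            exact Or.inl (Or.inl (Or.inl hx2))
          · by_contra hx2
            exact h2 ⟨x, hx, hx2⟩
        haveI := seg_countable i
        have hPD : ∀ k, Pt k ∩ D = ∅ := by
          intro k
          ext x
          simp only [Set.mem_inter_iff, Set.mem_empty_iff_false, iff_false, not_and]
          exact fun hx hxD => (hPsub k hx).2 (Or.inr hxD)
        have hQD : ∀ k, Qt k ∩ D = ∅ := by
          intro k
          ext x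
          simp only [Set.mem_inter_iff, Set.mem_empty_iff_false, iff_false, not_and]
          exact fun hx hxD => (hQsub k hx).2 (Or.inr hxD)
        refine baire_contra (X := X) hP₀perf hP₀ne hD'd
          (ι := Option {j : Idx // j < i} × Bool)
          (fun p => match p with
            | (none, false) => Pt i
            | (none, true) => Qt i
            | (some j, false) => Pt j.1
            | (some j, true) => Qt j.1)
          ?_ ?_
          (W := (⋃ j : {j : Idx // j < i}, (At j.1 ∪ Bt j.1)) ∪ (Bt i ∪ At i)) ?_ ?_
        · rintro ⟨_ | j, _ | _⟩
          exacts [hPcl i, hQcl i, hPcl j.1, hQcl j.1]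
        · rintro ⟨_ | j, _ | _⟩
          exacts [hPD i, hQD i, hPD j.1, hQD j.1]
        · exact (Set.countable_iUnion fun (j : {j : Idx // j < i}) => ((hAcnt j.1).union (hBcnt j.1))).union
            (((hBcnt i).union (hAcnt i)))
        · intro x _
          rcases hcov x with (((hx | hx) | hx) | hx) | hx
          · obtain ⟨j, hj⟩ := mem_iUnion.mp hx
            rcases hj with hj | hj
            · exact Or.inl (mem_iUnion.mpr ⟨(some j, false), hj⟩)
            · exact Or.inr (mem_union_left _ (mem_iUnion.mpr ⟨j, Or.inl hj⟩))
          · exact Or.inl (mem_iUnion.mpr ⟨(none, false), hx⟩)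
          · obtain ⟨j, hj⟩ := mem_iUnion.mp hx
            rcases hj with hj | hj
            · exact Or.inl (mem_iUnion.mpr ⟨(some j, true), hj⟩)
            · exact Or.inr (mem_union_left _ (mem_iUnion.mpr ⟨j, Or.inr hj⟩))
          · exact Or.inl (mem_iUnion.mpr ⟨(none, true), hx⟩)
          · exact Or.inr (mem_union_right _ (mem_union_left _ hx))
  · -- saturation for S
    intro B hB hunc
    obtain ⟨i, rfl⟩ := hsurj B hB
    have h1 : e i ∩ S ⊆ e i \ Tau i :=
      fun x hx => ⟨hx.1, fun hT => hST x hx.2 (hTauT i hT)⟩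
    have h2 : ¬(e i \ Tau i).Countable := fun h => hunc (h.mono h1)
    exact ⟨Pt i, (hPcl i).measurableSet,
      fun x hx => ⟨(hPsub i hx).1, hPS i hx⟩, hPunc i h2⟩
  · -- saturation for Sᶜ
    intro B hB hunc
    obtain ⟨i, rfl⟩ := hsurj B hB
    have h1 : e i ∩ Sᶜ ⊆ e i \ (Sig i ∪ Pt i) := by
      rintro x ⟨hx1, hx2⟩
      refine ⟨hx1, fun hm => hx2 ?_⟩
      rcases hm with hm | hm
      · exact hSigS i hm
      · exact hPS i hm
    have h2 : ¬(e i \ (Sig i ∪ Pt i)).Countable := fun h => hunc (h.mono h1)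
    refine ⟨Qt i, (hQcl i).measurableSet, fun x hx => ⟨(hQsub i hx).1, ?_⟩, hQunc i h2⟩
    exact fun hxS => hST x hxS (hQT i hx)

end SatCH

/-- under CH, every uncountable Polish space contains a non-Borel set S
such that both S and its complement are (Borel, countable)-saturated. -/
theorem exists_nonBorel_saturated_of_CH {X : Type*} [TopologicalSpace X] [PolishSpace X]
    [MeasurableSpace X] [BorelSpace X] [Uncountable X]
    (CH : Cardinal.continuum = Cardinal.aleph 1) :
    ∃ S : Set X, ¬MeasurableSet S ∧
      (∀ B : Set X, MeasurableSet B → ¬(B ∩ S).Countable →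
        ∃ C : Set X, MeasurableSet C ∧ C ⊆ B ∩ S ∧ ¬C.Countable) ∧
      (∀ B : Set X, MeasurableSet B → ¬(B ∩ Sᶜ).Countable →
        ∃ C : Set X, MeasurableSet C ∧ C ⊆ B ∩ Sᶜ ∧ ¬C.Countable) := by
  exact SatCH.main (SatCH.CH_transfer CH)
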